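/- The polynomial 2·x is not a Hilbert polynomial. -/

import Mathlib

open Polynomial

section Aux
open Module Submodule


open Module Submodule

/-- Over an infinite field, a subspace is not covered by finitely many subspaces
unless it is contained in one of them. -/
theorem avoid_finite_subspaces {K V : Type*} {ι : Type*} [Field K] [Infinite K]
    [AddCommGroup V] [Module K V] (t : Finset ι) (B : ι → Submodule K V)
    (W : Submodule K V) (hB : ∀ i ∈ t, ¬ W ≤ B i) :
    ∃ x ∈ W, ∀ i ∈ t, x ∉ B i := by
  classical
  induction t using Finset.induction with
  | empty => exact ⟨0, W.zero_mem, by simp⟩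
  | @insert a s ha ih =>
    obtain ⟨x, hxW, hx⟩ := ih fun i hi => hB i (Finset.mem_insert_of_mem hi)
    have hWa : ¬ W ≤ B a := hB a (Finset.mem_insert_self a s)
    obtain ⟨y, hyW, hy⟩ := SetLike.not_le_iff_exists.mp hWa
    -- the set of bad coefficients is finite
    have hfin : {c : K | ∃ i ∈ insert a s, x + c • y ∈ B i}.Finite := by
      have : {c : K | ∃ i ∈ insert a s, x + c • y ∈ B i} ⊆
          ⋃ i ∈ (insert a s : Finset ι), {c : K | x + c • y ∈ B i} := by
        intro c hc
        obtain ⟨i, hi, hci⟩ := hc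
        exact Set.mem_biUnion hi hci
      refine Set.Finite.subset (Set.Finite.biUnion (insert a s : Finset ι).finite_toSet
        (fun i hi => ?_)) this
      rcases Finset.mem_insert.mp hi with rfl | his
      · -- y ∉ B i here
        refine Set.Subsingleton.finite ?_
        intro c hc c' hc'
        by_contra hne
        have : (c - c') • y ∈ B i := by
          have := (B i).sub_mem hc hc'
          simpa [sub_smul] using this
        have : y ∈ B i := by
          have h2 := (B i).smul_mem (c - c')⁻¹ this
          rwa [smul_smul, inv_mul_cancel₀ (sub_ne_zero.mpr hne), one_smul] at h2
        exact hy this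
      · by_cases hyB : y ∈ B i
        · -- then no bad c at all
          refine Set.Subsingleton.finite ?_
          intro c hc c' hc'
          exfalso
          have : x ∈ B i := by
            have := (B i).sub_mem hc ((B i).smul_mem c hyB)
            simpa using this
          exact hx i his this
        · refine Set.Subsingleton.finite ?_
          intro c hc c' hc'
          by_contra hne
          have : (c - c') • y ∈ B i := by
            have := (B i).sub_mem hc hc'
            simpa [sub_smul] using this
          have : y ∈ B i := by
            have h2 := (B i).smul_mem (c - c')⁻¹ this
            rwa [smul_smul, inv_mul_cancel₀ (sub_ne_zero.mpr hne), one_smul] at h2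
          exact hyB this
    obtain ⟨c, hc⟩ := hfin.exists_notMem
    refine ⟨x + c • y, W.add_mem hxW (W.smul_mem c hyW), fun i hi hmem => hc ⟨i, hi, hmem⟩⟩

open Module Submodule TensorProduct

variable {k K R : Type*} [Field k] [Field K] [Algebra k K] [CommRing R] [Algebra k R]

/-- base change commutes with submodule multiplication -/
theorem baseChange_mul_submodule (p q : Submodule k R) :
    (p * q).baseChange K = (p.baseChange K) * (q.baseChange K) := by
  apply le_antisymm
  · rw [Submodule.baseChange_eq_span, Submodule.span_le]
    rintro - ⟨z, hz, rfl⟩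
    refine Submodule.mul_induction_on hz (fun x hx y hy => ?_) (fun x y hx hy => ?_)
    · have : (TensorProduct.mk k K R 1) (x * y) = ((1:K) ⊗ₜ[k] x) * ((1:K) ⊗ₜ[k] y) := by
        simp [Algebra.TensorProduct.tmul_mul_tmul]
      rw [this]
      exact Submodule.mul_mem_mul (Submodule.tmul_mem_baseChange_of_mem _ hx)
        (Submodule.tmul_mem_baseChange_of_mem _ hy)
    · simpa [map_add] using Submodule.add_mem _ hx hy
  · rw [Submodule.mul_le]
    intro a ha b hb
    have hgen : ∀ b' ∈ q.baseChange K, ∀ a' ∈ p.baseChange K, a' * b' ∈ (p * q).baseChange K := by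
      intro b' hb'
      refine Submodule.span_induction (p := fun b' _ => ∀ a' ∈ p.baseChange K,
        a' * b' ∈ (p * q).baseChange K) ?_ ?_ ?_ ?_ (by rwa [Submodule.baseChange_eq_span] at hb')
      · rintro - ⟨y, hy, rfl⟩ a' ha'
        refine Submodule.span_induction (p := fun a' _ => a' * (TensorProduct.mk k K R 1) y
          ∈ (p * q).baseChange K) ?_ ?_ ?_ ?_ (by rwa [Submodule.baseChange_eq_span] at ha')
        · rintro - ⟨x, hx, rfl⟩
          have : (TensorProduct.mk k K R 1) x * (TensorProduct.mk k K R 1) y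
              = (1:K) ⊗ₜ[k] (x * y) := by simp [Algebra.TensorProduct.tmul_mul_tmul]
          rw [this]
          exact Submodule.tmul_mem_baseChange_of_mem _ (Submodule.mul_mem_mul hx hy)
        · simp
        · intro u v _ _ hu hv
          simpa [add_mul] using Submodule.add_mem _ hu hv
        · intro c u _ hu
          simpa [smul_mul_assoc] using Submodule.smul_mem _ c hu
      · intro a' _; simp
      · intro u v _ _ hu hv a' ha'
        simpa [mul_add] using Submodule.add_mem _ (hu a' ha') (hv a' ha')
      · intro c u _ hu a' ha'
        simpa [mul_smul_comm] using Submodule.smul_mem _ c (hu a' ha')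
    exact hgen b hb a ha

theorem baseChange_iSup_le {ι : Sort*} (p : ι → Submodule k R) :
    (⨆ i, p i).baseChange K ≤ ⨆ i, (p i).baseChange K := by
  rw [Submodule.baseChange_eq_span, Submodule.span_le]
  rintro - ⟨x, hx, rfl⟩
  refine Submodule.iSup_induction (motive := fun x => (TensorProduct.mk k K R 1) x
    ∈ ⨆ i, (p i).baseChange K) p hx (fun i x hxi => ?_) (by simp) (fun x y hx hy => ?_)
  · exact Submodule.mem_iSup_of_mem i (Submodule.tmul_mem_baseChange_of_mem _ hxi)
  · simpa [map_add] using Submodule.add_mem _ hx hy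

theorem finrank_baseChange_submodule (p : Submodule k R) [FiniteDimensional k p] :
    FiniteDimensional K (p.baseChange K (M := R)) ∧
      finrank K (p.baseChange K (M := R)) = finrank k p := by
  classical
  set d := finrank k p
  let b : Basis (Fin d) k p := Module.finBasis k p
  let v : Fin d → R := fun i => (b i : R)
  have hsp : Submodule.span k (Set.range v) = p := by
    have : Set.range v = p.subtype '' (Set.range b) := by
      ext x; simp [v, Set.range_comp]
    rw [this, Submodule.span_image, b.span_eq, Submodule.map_top, Submodule.range_subtype]
  have hbc : p.baseChange K (M := R) =
      Submodule.span K (Set.range fun i => (1:K) ⊗ₜ[k] (v i)) := by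
    rw [← hsp, Submodule.baseChange_span]
    congr 1
    ext x
    simp [v]
  -- linear independence
  obtain ⟨q, hq⟩ := Submodule.exists_isCompl p
  let pr : R →ₗ[k] p := Submodule.linearProjOfIsCompl p q hq
  let F : K ⊗[k] R →ₗ[K] K ⊗[k] p := pr.baseChange K
  have hFv : ∀ i, F ((1:K) ⊗ₜ[k] (v i)) = (b.baseChange K) i := by
    intro i
    rw [Basis.baseChange_apply]
    simp only [F, LinearMap.baseChange_tmul]
    congr 1
    exact Submodule.linearProjOfIsCompl_apply_left hq (b i)
  have hli : LinearIndependent K (fun i => (1:K) ⊗ₜ[k] (v i) : Fin d → K ⊗[k] R) := by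
    have hbi : LinearIndependent K (b.baseChange K) := (b.baseChange K).linearIndependent
    refine LinearIndependent.of_comp F ?_
    have : (F ∘ fun i => (1:K) ⊗ₜ[k] (v i)) = b.baseChange K := by
      funext i; exact hFv i
    rw [this]; exact hbi
  constructor
  · rw [hbc]
    exact FiniteDimensional.span_of_finite K (Set.finite_range _)
  · rw [hbc, finrank_span_eq_card hli]
    simp [d]

open Module Submodule DirectSum

variable {k R : Type*} [Field k] [CommRing R] [Algebra k R]

theorem graded_facts (𝒜 : ℕ → Submodule k R) [GradedAlgebra 𝒜]
    (hadj : Algebra.adjoin k ((𝒜 1 : Submodule k R) : Set R) = ⊤) :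
    (∀ m n, 𝒜 m * 𝒜 n = 𝒜 (m + n)) ∧ 𝒜 0 = Submodule.span k {1} ∧ (⨆ n, 𝒜 n = ⊤) := by
  have hpow : ∀ j, (𝒜 1) ^ j ≤ 𝒜 j := by
    intro j
    induction j with
    | zero =>
      rw [pow_zero, Submodule.one_eq_span, Submodule.span_le, Set.singleton_subset_iff]
      exact SetLike.one_mem_graded 𝒜
    | succ n ih =>
      rw [pow_succ, Submodule.mul_le]
      intro x hx y hy
      exact SetLike.mul_mem_graded (ih hx) hy
  -- every element lies in the supremum of powers of 𝒜 1
  have htop' : (⊤ : Submodule k R) ≤ ⨆ j, (𝒜 1) ^ j := by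
    have h1 : (⊤ : Submodule k R) = Subalgebra.toSubmodule (Algebra.adjoin k
        ((𝒜 1 : Submodule k R) : Set R)) := by rw [hadj]; rfl
    rw [h1, Algebra.adjoin_eq_span, Submodule.span_le]
    intro x hx
    have : ∃ j, x ∈ (𝒜 1) ^ j := by
      refine Submonoid.closure_induction (motive := fun y _ => ∃ j, y ∈ (𝒜 1) ^ j)
        (fun y hy => ⟨1, by rwa [pow_one]⟩)
        ⟨0, by rw [pow_zero, Submodule.one_eq_span]; exact Submodule.mem_span_singleton_self 1⟩
        (fun y z _ _ hy hz => by
          obtain ⟨j, hj⟩ := hy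
          obtain ⟨j', hj'⟩ := hz
          exact ⟨j + j', by rw [pow_add]; exact Submodule.mul_mem_mul hj hj'⟩) hx
    obtain ⟨j, hj⟩ := this
    exact SetLike.mem_coe.mpr (Submodule.mem_iSup_of_mem j hj)
  -- projections
  have hproj_same : ∀ (n : ℕ) (x : R), x ∈ 𝒜 n → ((DirectSum.decompose 𝒜 x n : 𝒜 n) : R) = x :=
    fun n x hx => DirectSum.decompose_of_mem_same 𝒜 hx
  have hproj_ne : ∀ (m n : ℕ) (x : R), x ∈ 𝒜 m → m ≠ n →
      ((DirectSum.decompose 𝒜 x n : 𝒜 n) : R) = 0 :=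
    fun m n x hx h => DirectSum.decompose_of_mem_ne 𝒜 hx h
  have key : ∀ (n : ℕ) (x : R), x ∈ 𝒜 n → x ∈ (𝒜 1) ^ n := by
    intro n x hx
    have hxt : x ∈ ⨆ j, (𝒜 1) ^ j := htop' Submodule.mem_top
    have hC : ((DirectSum.decompose 𝒜 x n : 𝒜 n) : R) ∈ (𝒜 1) ^ n := by
      refine Submodule.iSup_induction (motive := fun y =>
        ((DirectSum.decompose 𝒜 y n : 𝒜 n) : R) ∈ (𝒜 1) ^ n) _ hxt ?_ ?_ ?_
      · intro j y hy
        by_cases hjn : j = n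
        · subst hjn
          rw [hproj_same j y (hpow j hy)]
          exact hy
        · rw [hproj_ne j n y (hpow j hy) hjn]
          exact Submodule.zero_mem _
      · simp
      · intro y z hy hz
        rw [DirectSum.decompose_add]
        push_cast [DirectSum.add_apply]
        exact Submodule.add_mem _ hy hz
    rwa [hproj_same n x hx] at hC
  have hle : ∀ n, 𝒜 n ≤ (𝒜 1) ^ n := fun n x hx => key n x hx
  have heq : ∀ n, (𝒜 1) ^ n = 𝒜 n := fun n => le_antisymm (hpow n) (hle n)
  refine ⟨fun m n => ?_, ?_, ?_⟩
  · rw [← heq m, ← heq n, ← heq (m + n), pow_add]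
  · rw [← heq 0, pow_zero, Submodule.one_eq_span]
  · apply le_antisymm le_top
    refine le_trans htop' (iSup_mono hpow)

open Module Submodule

theorem no_two_n {K R : Type*} [Field K] [Infinite K] [CommRing R] [Algebra K R]
    (V : ℕ → Submodule K R)
    (hfd : ∀ n, FiniteDimensional K (V n))
    (hmul : ∀ m n, V m * V n = V (m + n))
    (hone : V 0 = Submodule.span K {(1 : R)})
    (htop : ⨆ n, V n = ⊤)
    (N : ℕ) (hdim : ∀ n, N ≤ n → finrank K (V n) = 2 * n) : False := by
  classical
  -- R is nontrivial
  have hVne : V (N + 1) ≠ ⊥ := by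
    intro h
    have h1 := hdim (N + 1) (by omega)
    rw [h, finrank_bot] at h1
    omega
  obtain ⟨x₀, hx₀V, hx₀⟩ := (Submodule.ne_bot_iff _).mp hVne
  haveI : Nontrivial R := nontrivial_of_ne x₀ 0 hx₀
  -- Noetherian
  have hVadj : ∀ n, V n ≤ Subalgebra.toSubmodule (Algebra.adjoin K ((V 1 : Set R))) := by
    intro n
    induction n with
    | zero =>
      rw [hone, Submodule.span_le, Set.singleton_subset_iff]
      exact Subalgebra.one_mem _
    | succ m ih =>
      have : V 1 * V m = V (m + 1) := by rw [hmul 1 m, Nat.add_comm]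
      rw [← this, Submodule.mul_le]
      intro x hx y hy
      exact Subalgebra.mul_mem _ (Algebra.subset_adjoin hx) (ih hy)
  have hadj : Algebra.adjoin K ((V 1 : Set R)) = ⊤ := by
    rw [← Algebra.toSubmodule_eq_top, eq_top_iff, ← htop]
    exact iSup_le hVadj
  haveI : Algebra.FiniteType K R := by
    obtain ⟨s, hs⟩ := Module.Finite.fg_top (R := K) (M := V 1)
    refine ⟨⟨s.image (Subtype.val : V 1 → R), ?_⟩⟩
    have hsp : Submodule.span K ((s.image (Subtype.val : V 1 → R)) : Set R) = V 1 := by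
      have : ((s.image (Subtype.val : V 1 → R)) : Set R) = (V 1).subtype '' (s : Set (V 1)) := by
        simp [Finset.coe_image]
      rw [this, Submodule.span_image, hs, Submodule.map_top, Submodule.range_subtype]
    rw [← Algebra.adjoin_span, hsp]
    exact hadj
  haveI : IsNoetherianRing R := Algebra.FiniteType.isNoetherianRing K R
  -- Lasker decomposition of ⊥
  obtain ⟨t, htinf, hprim⟩ : ∃ t : Finset (Ideal R), t.inf id = ⊥ ∧ ∀ ⦃J⦄, J ∈ t → J.IsPrimary :=
    Submodule.isLasker R R (⊥ : Ideal R)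
  set t' : Finset (Ideal R) :=
    t.filter (fun Q => ¬ ((V 1 : Submodule K R) ≤ (Ideal.radical Q).restrictScalars K)) with ht'
  set I' : Ideal R := t'.inf id with hI'
  -- uniform bound for the "irrelevant" components
  have hN2 : ∃ N₂ : ℕ, 1 ≤ N₂ ∧ ∀ Q ∈ t, ((V 1 : Submodule K R) ≤ Q.radical.restrictScalars K) →
      ∀ n, N₂ ≤ n → V n ≤ Q.restrictScalars K := by
    have key : ∀ s : Finset (Ideal R), ∃ N₂ : ℕ, 1 ≤ N₂ ∧ ∀ Q ∈ s,
        ((V 1 : Submodule K R) ≤ Q.radical.restrictScalars K) →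
        ∀ n, N₂ ≤ n → V n ≤ Q.restrictScalars K := by
      intro s
      induction s using Finset.induction with
      | empty => exact ⟨1, le_refl 1, by simp⟩
      | @insert a u ha ih =>
        obtain ⟨N₂, hN₂1, hN₂⟩ := ih
        by_cases hva : (V 1 : Submodule K R) ≤ a.radical.restrictScalars K
        · obtain ⟨m, hm⟩ := Ideal.exists_radical_pow_le_of_fg a (IsNoetherian.noetherian _)
          have hVr : ∀ n, 1 ≤ n → V n ≤ (a.radical ^ n).restrictScalars K := by
            intro n hn
            induction n with
            | zero => omega
            | succ p ihp =>
              rcases Nat.eq_or_lt_of_le hn with h1 | h1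
              · rw [← h1, pow_one]
                exact hva
              · have hp : 1 ≤ p := by omega
                have : V 1 * V p = V (p + 1) := by rw [hmul 1 p, Nat.add_comm]
                rw [← this, Submodule.mul_le]
                intro x hx y hy
                have hx' : x ∈ a.radical := hva hx
                have hy' : y ∈ a.radical ^ p := ihp hp hy
                have : x * y ∈ a.radical * a.radical ^ p := Ideal.mul_mem_mul hx' hy'
                rwa [← pow_succ'] at this
          refine ⟨max (max N₂ m) 1, le_max_right _ 1, fun Q hQ hrad n hn => ?_⟩
          rcases Finset.mem_insert.mp hQ with rfl | hQu
          · have h1n : 1 ≤ n := le_trans (le_max_right _ _) hn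
            have hmn : m ≤ n := le_trans (le_trans (le_max_right N₂ m) (le_max_left _ _)) hn
            refine le_trans (hVr n h1n) ?_
            intro z hz
            exact hm (Ideal.pow_le_pow_right hmn hz)
          · exact hN₂ Q hQu hrad n (le_trans (le_trans (le_max_left N₂ m) (le_max_left _ _)) hn)
        · refine ⟨N₂, hN₂1, fun Q hQ hrad n hn => ?_⟩
          rcases Finset.mem_insert.mp hQ with rfl | hQu
          · exact absurd hrad hva
          · exact hN₂ Q hQu hrad n hn
    exact key t
  obtain ⟨N₂, hN₂1, hN₂⟩ := hN2
  -- the "local cohomology" pieces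
  set W : ℕ → Submodule K R := fun n => (Submodule.restrictScalars K (I' : Ideal R)) ⊓ V n with hW
  haveI hWfd : ∀ n, FiniteDimensional K (W n) :=
    fun n => by haveI := hfd n; exact Submodule.finiteDimensional_of_le inf_le_right
  have hWV : ∀ n, W n ≤ V n := fun n => inf_le_right
  have hWzero : ∀ n, N₂ ≤ n → W n = ⊥ := by
    intro n hn
    rw [eq_bot_iff]
    intro z hz
    obtain ⟨hzI, hzV⟩ := hz
    have : z ∈ t.inf id := by
      rw [Submodule.mem_finsetInf]
      intro Q hQ
      by_cases hrad : (V 1 : Submodule K R) ≤ Q.radical.restrictScalars K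
      · exact hN₂ Q hQ hrad n hn hzV
      · have hQt' : Q ∈ t' := Finset.mem_filter.mpr ⟨hQ, hrad⟩
        have hle : I' ≤ Q := Finset.inf_le (f := id) hQt'
        exact hle ((Submodule.restrictScalars_mem K _ _).mp hzI)
    rw [htinf] at this
    simpa using this
  -- absorption
  have hWabs : ∀ m n, V m * W n ≤ W (m + n) := by
    intro m n
    rw [Submodule.mul_le]
    intro x hx w hw
    obtain ⟨hwI, hwV⟩ := hw
    constructor
    · exact (Submodule.restrictScalars_mem K _ _).mpr
        (Ideal.mul_mem_left _ x ((Submodule.restrictScalars_mem K _ _).mp hwI))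
    · rw [← hmul m n]
      exact Submodule.mul_mem_mul hx hwV
  -- 1 ∉ I'
  have honeI : (1 : R) ∉ I' := by
    intro h1
    have hIt : I' = ⊤ := (Ideal.eq_top_iff_one I').mpr h1
    have hn3 : W (max N N₂ + 1) = ⊥ := hWzero _ (by omega)
    have : V (max N N₂ + 1) = ⊥ := by
      rw [← hn3, hW, hIt]
      simp
    have h2 := hdim (max N N₂ + 1) (by omega)
    rw [this, finrank_bot] at h2
    omega
  have hW0 : W 0 = ⊥ := by
    rw [eq_bot_iff]
    intro z hz
    obtain ⟨hzI, hzV⟩ := hz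
    rw [hone] at hzV
    obtain ⟨c, rfl⟩ := Submodule.mem_span_singleton.mp hzV
    rcases eq_or_ne c 0 with rfl | hc
    · simp
    · exfalso
      apply honeI
      have := Submodule.smul_mem (Submodule.restrictScalars K (I' : Ideal R)) c⁻¹ hzI
      rw [smul_smul, inv_mul_cancel₀ hc, one_smul] at this
      exact (Submodule.restrictScalars_mem K _ _).mp this
  -- choose a degree-one regular element
  obtain ⟨ℓ, hℓ1, hℓ⟩ := avoid_finite_subspaces t'
    (fun Q => (Ideal.radical Q).restrictScalars K) (V 1)
    (fun Q hQ => (Finset.mem_filter.mp hQ).2)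
  have hreg : ∀ v : R, ℓ * v ∈ I' → v ∈ I' := by
    intro v hv
    rw [hI', Submodule.mem_finsetInf]
    intro Q hQ
    have hQt : Q ∈ t := (Finset.mem_filter.mp hQ).1
    have hvQ : v * ℓ ∈ Q := by
      rw [mul_comm]
      exact Finset.inf_le (f := id) hQ hv
    rcases (Ideal.isPrimary_iff.mp (hprim hQt)).2 hvQ with h | h
    · exact h
    · exact absurd ((Submodule.restrictScalars_mem K _ _).mpr h) (hℓ Q hQ)
  -- multiplication by ℓ
  set mulf : R →ₗ[K] R := LinearMap.mulLeft K ℓ with hmulf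
  -- the modules X n
  set X : ℕ → Submodule K R := fun n => match n with
    | 0 => ⊥
    | (m + 1) => W (m + 1) ⊔ (V m).map mulf with hX
  have hX0 : X 0 = ⊥ := rfl
  have hXs : ∀ m, X (m + 1) = W (m + 1) ⊔ (V m).map mulf := fun m => rfl
  have hmapV : ∀ m, (V m).map mulf ≤ V (m + 1) := by
    intro m y hy
    obtain ⟨x, hx, rfl⟩ := hy
    have : mulf x = ℓ * x := LinearMap.mulLeft_apply K ℓ x
    rw [this]
    have := Submodule.mul_mem_mul hℓ1 hx
    rwa [hmul 1 m, Nat.add_comm] at this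
  have hXV : ∀ n, X n ≤ V n := by
    intro n
    match n with
    | 0 => exact bot_le
    | (m + 1) => exact sup_le (hWV _) (hmapV m)
  haveI hXfd : ∀ n, FiniteDimensional K (X n) :=
    fun n => by haveI := hfd n; exact Submodule.finiteDimensional_of_le (hXV n)
  haveI hMfd : ∀ n, FiniteDimensional K ((V n).map mulf) :=
    fun n => by haveI := hfd (n+1); exact Submodule.finiteDimensional_of_le (hmapV n)
  -- kernel of multiplication by ℓ inside V n
  have hEW : ∀ n, (LinearMap.ker mulf) ⊓ V n ≤ W n := by
    intro n z hz
    obtain ⟨hzk, hzV⟩ := hz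
    refine ⟨(Submodule.restrictScalars_mem K _ _).mpr ?_, hzV⟩
    have : ℓ * z = 0 := by
      have := LinearMap.mem_ker.mp hzk
      rwa [LinearMap.mulLeft_apply] at this
    apply hreg
    rw [this]
    exact Ideal.zero_mem _
  -- rank-nullity on a finite-dimensional submodule
  have hrank : ∀ p : Submodule K R, ∀ _ : FiniteDimensional K p,
      finrank K (p.map mulf) + finrank K ((LinearMap.ker mulf) ⊓ p : Submodule K R)
        = finrank K p := by
    intro p hp
    have h1 := LinearMap.finrank_range_add_finrank_ker (mulf ∘ₗ p.subtype)
    have h2 : LinearMap.range (mulf ∘ₗ p.subtype) = p.map mulf := by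
      rw [LinearMap.range_comp, Submodule.range_subtype]
    have h3 : LinearMap.ker (mulf ∘ₗ p.subtype)
        = Submodule.comap p.subtype ((LinearMap.ker mulf) ⊓ p) := by
      rw [LinearMap.ker_comp, Submodule.comap_inf, Submodule.comap_subtype_self, inf_top_eq]
    have h4 : finrank K (LinearMap.ker (mulf ∘ₗ p.subtype))
        = finrank K ((LinearMap.ker mulf) ⊓ p : Submodule K R) := by
      rw [h3]
      exact (Submodule.comapSubtypeEquivOfLe inf_le_right).finrank_eq
    rw [h2, h4] at h1
    exact h1
  -- the key dimension identity
  have hkey : ∀ n, finrank K (X (n + 1)) + finrank K (W n)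
      = finrank K (W (n + 1)) + finrank K (V n) := by
    intro n
    have hWM : W (n + 1) ⊓ (V n).map mulf = (W n).map mulf := by
      apply le_antisymm
      · rintro z ⟨hzW, hzM⟩
        obtain ⟨x, hx, rfl⟩ := hzM
        have hℓx : mulf x = ℓ * x := LinearMap.mulLeft_apply K ℓ x
        have hxI : x ∈ I' := by
          apply hreg
          rw [← hℓx]
          exact (Submodule.restrictScalars_mem K _ _).mp hzW.1
        exact ⟨x, ⟨(Submodule.restrictScalars_mem K _ _).mpr hxI, hx⟩, rfl⟩
      · rintro z ⟨w, hw, rfl⟩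
        constructor
        · have hwi := hWabs 1 n
          have : ℓ * w ∈ V 1 * W n := Submodule.mul_mem_mul hℓ1 hw
          have h2 : ℓ * w ∈ W (1 + n) := hwi this
          rw [Nat.add_comm] at h2
          have : mulf w = ℓ * w := LinearMap.mulLeft_apply K ℓ w
          rwa [this]
        · exact ⟨w, hWV n hw, rfl⟩
    haveI := hWfd (n+1)
    haveI := hMfd n
    have hsup := Submodule.finrank_sup_add_finrank_inf_eq (W (n + 1)) ((V n).map mulf)
    rw [hWM] at hsup
    have hrV := hrank (V n) (hfd n)
    have hrW := hrank (W n) (hWfd n)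
    have hker : (LinearMap.ker mulf) ⊓ W n = (LinearMap.ker mulf) ⊓ V n := by
      apply le_antisymm
      · exact inf_le_inf_left _ (hWV n)
      · intro z hz
        exact ⟨hz.1, hEW n hz⟩
    rw [hker] at hrW
    rw [hXs n]
    omega
  -- b n and the telescoping identity
  set b : ℕ → ℕ := fun n => finrank K (V n) - finrank K (X n) with hb
  have hbX : ∀ n, finrank K (X n) + b n = finrank K (V n) := by
    intro n
    haveI := hfd n
    have : finrank K (X n) ≤ finrank K (V n) := Submodule.finrank_mono (hXV n)
    simp only [hb]
    omega
  have htel : ∀ n, finrank K (V n) = finrank K (W n) + ∑ j ∈ Finset.range (n + 1), b j := by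
    intro n
    induction n with
    | zero =>
      have h0 : finrank K (X 0) = 0 := by rw [hX0]; exact finrank_bot K R
      have hw0 : finrank K (W 0) = 0 := by rw [hW0]; exact finrank_bot K R
      have := hbX 0
      have hs : ∑ j ∈ Finset.range (0 + 1), b j = b 0 := by simp
      omega
    | succ m ih =>
      have h1 := hkey m
      have h2 := hbX (m + 1)
      rw [Finset.sum_range_succ]
      omega
  -- products with X are absorbed
  have hXmulV : ∀ a c, X a * V c ≤ X (a + c) := by
    intro a c
    match a with
    | 0 =>
      rw [hX0, Submodule.bot_mul]
      exact bot_le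
    | (m + 1) =>
      rw [hXs m, Submodule.sup_mul]
      have hidx : m + 1 + c = (m + c) + 1 := by omega
      rw [hidx, hXs (m + c)]
      apply sup_le
      · refine le_trans ?_ le_sup_left
        rw [mul_comm (W (m+1)) (V c)]
        have h1 := hWabs c (m + 1)
        have hidx2 : c + (m + 1) = m + c + 1 := by omega
        rwa [hidx2] at h1
      · refine le_trans ?_ le_sup_right
        rw [Submodule.mul_le]
        rintro y ⟨x, hx, rfl⟩ z hz
        refine ⟨x * z, ?_, ?_⟩
        · rw [← hmul m c]
          exact Submodule.mul_mem_mul hx hz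
        · simp only [hmulf, LinearMap.mulLeft_apply]
          ring
  -- each b j is at least 2 for j ≥ 1
  have hb2 : ∀ j, 1 ≤ j → 2 ≤ b j := by
    intro j hj
    by_contra hlt
    push_neg at hlt
    have hbj : finrank K (V j) ≤ finrank K (X j) + 1 := by
      have := hbX j
      omega
    obtain ⟨v, hvV, hcov⟩ : ∃ v, v ∈ V j ∧ V j ≤ X j ⊔ Submodule.span K {v} := by
      by_cases hVX : V j ≤ X j
      · exact ⟨0, (V j).zero_mem, le_trans hVX le_sup_left⟩
      · obtain ⟨v, hv, hvX⟩ := SetLike.not_le_iff_exists.mp hVX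
        refine ⟨v, hv, ?_⟩
        have hv0 : v ≠ 0 := fun h => hvX (h ▸ (X j).zero_mem)
        have hle : X j ⊔ Submodule.span K {v} ≤ V j :=
          sup_le (hXV j) ((Submodule.span_singleton_le_iff_mem v _).mpr hv)
        haveI := hfd j
        haveI : FiniteDimensional K (Submodule.span K {v}) :=
          Submodule.finiteDimensional_of_le
            ((Submodule.span_singleton_le_iff_mem v _).mpr hv)
        have hinf : X j ⊓ Submodule.span K {v} = ⊥ := by
          rw [eq_bot_iff]
          rintro z ⟨hzX, hzs⟩
          obtain ⟨c, rfl⟩ := Submodule.mem_span_singleton.mp hzs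
          rcases eq_or_ne c 0 with rfl | hc
          · simp
          · exfalso
            apply hvX
            have := Submodule.smul_mem (X j) c⁻¹ hzX
            rwa [smul_smul, inv_mul_cancel₀ hc, one_smul] at this
        have hfr := Submodule.finrank_sup_add_finrank_inf_eq (X j) (Submodule.span K {v})
        rw [hinf, finrank_bot, finrank_span_singleton hv0] at hfr
        have heq : X j ⊔ Submodule.span K {v} = V j :=
          Submodule.eq_of_le_of_finrank_le hle (by omega)
        rw [heq]
    -- powers of v
    have hpowv : ∀ s, 1 ≤ s → v ^ s ∈ V (s * j) := by
      intro s hs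
      induction s, hs using Nat.le_induction with
      | base => simpa [pow_one, one_mul] using hvV
      | succ s hs ih =>
        have : v ^ (s + 1) = v ^ s * v := by rw [pow_succ]
        rw [this]
        have h2 := Submodule.mul_mem_mul ih hvV
        rw [hmul (s * j) j] at h2
        have hidx : s * j + j = (s + 1) * j := by ring
        rwa [hidx] at h2
    -- the covering claim for all powers
    have hclaim : ∀ s, 1 ≤ s → V (s * j) ≤ X (s * j) ⊔ Submodule.span K {v ^ s} := by
      intro s hs
      induction s, hs using Nat.le_induction with
      | base => simpa [pow_one, one_mul] using hcov
      | succ s hs ih =>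
        have hmulV : V ((s + 1) * j) = V j * V (s * j) := by
          rw [hmul]
          congr 1
          ring
        rw [hmulV]
        refine le_trans (mul_le_mul' hcov ih) ?_
        rw [Submodule.sup_mul, Submodule.mul_sup, Submodule.mul_sup]
        have hidx : j + s * j = (s + 1) * j := by ring
        have hidx2 : s * j + j = (s + 1) * j := by ring
        have t1 : X j * X (s * j) ≤ X ((s + 1) * j) := by
          refine le_trans (mul_le_mul' le_rfl (hXV _)) ?_
          rw [← hidx]
          exact hXmulV j (s * j)
        have t2 : X j * Submodule.span K {v ^ s} ≤ X ((s + 1) * j) := by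
          refine le_trans (mul_le_mul' le_rfl
            ((Submodule.span_singleton_le_iff_mem _ _).mpr (hpowv s hs))) ?_
          rw [← hidx]
          exact hXmulV j (s * j)
        have t3 : Submodule.span K {v} * X (s * j) ≤ X ((s + 1) * j) := by
          rw [mul_comm (Submodule.span K {v}) (X (s * j))]
          refine le_trans (mul_le_mul' le_rfl
            ((Submodule.span_singleton_le_iff_mem _ _).mpr hvV)) ?_
          rw [← hidx2]
          exact hXmulV (s * j) j
        have t4 : Submodule.span K {v} * Submodule.span K {v ^ s}
            = Submodule.span K {v ^ (s + 1)} := by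
          rw [Submodule.span_mul_span, Set.singleton_mul_singleton, ← pow_succ']
        apply sup_le
        · apply sup_le
          · exact le_trans t1 le_sup_left
          · exact le_trans t2 le_sup_left
        · apply sup_le
          · exact le_trans t3 le_sup_left
          · rw [t4]
            exact le_sup_right
    -- contradiction at a large multiple of j
    set s₀ := max N N₂ + 1 with hs₀def
    have hs₀ : 1 ≤ s₀ := by omega
    set n := s₀ * j with hndef
    have hn1 : max N N₂ + 1 ≤ n := by
      calc max N N₂ + 1 = s₀ := rfl
      _ = s₀ * 1 := (mul_one s₀).symm
      _ ≤ s₀ * j := Nat.mul_le_mul_left s₀ hj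
    obtain ⟨m, hm⟩ : ∃ m, n = m + 1 := ⟨n - 1, by omega⟩
    have hWm : W m = ⊥ := hWzero m (by omega)
    have hWm1 : W (m + 1) = ⊥ := hWzero (m + 1) (by omega)
    have hk := hkey m
    rw [hWm, hWm1, finrank_bot] at hk
    have hVm : finrank K (V m) = 2 * m := hdim m (by omega)
    have hVn : finrank K (V (m + 1)) = 2 * (m + 1) := hdim (m + 1) (by omega)
    have hcl := hclaim s₀ hs₀
    rw [← hndef, hm] at hcl
    haveI := hfd (m + 1)
    haveI : FiniteDimensional K (Submodule.span K {v ^ s₀}) := by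
      apply Submodule.finiteDimensional_of_le (S₂ := V (m + 1))
      rw [Submodule.span_singleton_le_iff_mem, ← hm, hndef]
      exact hpowv s₀ hs₀
    haveI := hXfd (m + 1)
    have hup : finrank K (V (m + 1)) ≤ finrank K (X (m + 1)) + 1 := by
      haveI : FiniteDimensional K (X (m + 1) ⊔ Submodule.span K {v ^ s₀} : Submodule K R) := by
        apply Submodule.finiteDimensional_of_le (S₂ := V (m + 1))
        apply sup_le (hXV (m + 1))
        rw [Submodule.span_singleton_le_iff_mem, ← hm, hndef]
        exact hpowv s₀ hs₀
      have h1 : finrank K (V (m + 1)) ≤ finrank K (X (m + 1) ⊔ Submodule.span K {v ^ s₀}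
          : Submodule K R) := Submodule.finrank_mono hcl
      have h2 := Submodule.finrank_sup_add_finrank_inf_eq (X (m + 1))
        (Submodule.span K {v ^ s₀})
      have h3 : finrank K (Submodule.span K {v ^ s₀}) ≤ 1 := by
        rcases eq_or_ne (v ^ s₀) 0 with h | h
        · rw [h, Submodule.span_zero_singleton, finrank_bot]
          omega
        · rw [finrank_span_singleton h]
      omega
    omega
  -- final contradiction
  have hsum : ∀ n, 2 * n + 1 ≤ ∑ j ∈ Finset.range (n + 1), b j := by
    intro n
    induction n with
    | zero =>
      have h0 : finrank K (V 0) = 1 := by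
        rw [hone]
        exact finrank_span_singleton one_ne_zero
      have hX0' : finrank K (X 0) = 0 := by rw [hX0]; exact finrank_bot K R
      have := hbX 0
      have hs : ∑ j ∈ Finset.range (0 + 1), b j = b 0 := by simp
      omega
    | succ m ih =>
      rw [Finset.sum_range_succ]
      have := hb2 (m + 1) (by omega)
      omega
  have h1 := htel (max N N₂ + 1)
  have h2 := hdim (max N N₂ + 1) (by omega)
  have h3 := hWzero (max N N₂ + 1) (by omega)
  rw [h3, finrank_bot] at h1
  have h4 := hsum (max N N₂ + 1)
  omega

end Aux

/-- A polynomial `f ∈ ℚ[x]` is a *Hilbert polynomial* if there exist a field `k`,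
a standard graded `k`-algebra `R` (a commutative `ℕ`-graded `k`-algebra with
finite-dimensional graded pieces, generated as a `k`-algebra by its degree-one part)
and an `N₀` such that `dim_k R_i = f(i)` for all `i ≥ N₀`. -/
def IsHilbertPolynomial (f : Polynomial ℚ) : Prop :=
  ∃ (k : Type) (R : Type) (_ : Field k) (_ : CommRing R) (_ : Algebra k R)
    (𝒜 : ℕ → Submodule k R) (_ : GradedAlgebra 𝒜),
    (∀ i : ℕ, FiniteDimensional k (𝒜 i)) ∧
    Algebra.adjoin k ((𝒜 1 : Submodule k R) : Set R) = ⊤ ∧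
    ∃ N₀ : ℕ, ∀ i : ℕ, N₀ ≤ i → (Module.finrank k (𝒜 i) : ℚ) = f.eval (i : ℚ)

theorem sign_patterns_stmt6 :
    ¬ IsHilbertPolynomial (Polynomial.C (2 : ℚ) * Polynomial.X) := by
  rintro ⟨k, R, hk, hR, hAlg, 𝒜, hGA, hfd, hadj, N₀, hval⟩
  -- the dimensions are 2 * i
  have hdim : ∀ i : ℕ, N₀ ≤ i → Module.finrank k (𝒜 i) = 2 * i := by
    intro i hi
    have h1 := hval i hi
    rw [Polynomial.eval_mul, Polynomial.eval_C, Polynomial.eval_X] at h1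
    have h2 : ((Module.finrank k (𝒜 i) : ℚ)) = ((2 * i : ℕ) : ℚ) := by
      rw [h1]
      push_cast
      ring
    exact_mod_cast h2
  obtain ⟨hmul, hone, htop⟩ := graded_facts 𝒜 hadj
  -- base change to an infinite field
  set K := FractionRing (Polynomial k) with hK
  haveI : Infinite K :=
    Infinite.of_injective (algebraMap (Polynomial k) K)
      (IsFractionRing.injective (Polynomial k) K)
  -- the base-changed algebra
  letI R' := TensorProduct k K R
  set V : ℕ → Submodule K (TensorProduct k K R) := fun n => (𝒜 n).baseChange K with hV
  have hbc := fun n => finrank_baseChange_submodule (K := K) (𝒜 n)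
  have hfd' : ∀ n, FiniteDimensional K (V n) := fun n => (hbc n).1
  have hmul' : ∀ m n, V m * V n = V (m + n) := by
    intro m n
    rw [hV]
    simp only
    rw [← baseChange_mul_submodule, hmul]
  have hone' : V 0 = Submodule.span K {(1 : TensorProduct k K R)} := by
    rw [hV]
    simp only
    rw [hone, Submodule.baseChange_span, Set.image_singleton]
    congr 1
  have htop' : ⨆ n, V n = ⊤ := by
    apply le_antisymm le_top
    have h1 : (⊤ : Submodule K (TensorProduct k K R))
        = ((⊤ : Submodule k R).baseChange K) := (Submodule.baseChange_top (A := K)).symm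
    rw [h1, ← htop]
    exact baseChange_iSup_le 𝒜
  have hdim' : ∀ n, N₀ ≤ n → Module.finrank K (V n) = 2 * n := by
    intro n hn
    rw [hV]
    simp only
    rw [(hbc n).2]
    exact hdim n hn
  exact no_two_n V hfd' hmul' hone' htop' N₀ hdim'
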